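/- Define s(n,x) = Σ_{k=1}^n sin²(x·(k-1)!/k). Then for every integer n > 1, the floor of s(n, π/2) equals π(n), the number of primes ≤ n. -/

import Mathlib

lemma prod_dvd_fact {s : Finset ℕ} {m : ℕ} (h : s ⊆ Finset.Icc 1 m) :
    (∏ x ∈ s, x) ∣ m.factorial := by
  rw [← Finset.prod_Ico_id_eq_factorial]
  refine Finset.prod_dvd_prod_of_subset _ _ _ (fun x hx => ?_)
  have := h hx
  simp only [Finset.mem_Icc] at this
  simp only [Finset.mem_Ico]
  omega

lemma comp_dvd {k : ℕ} (hk : 6 ≤ k) (hp : ¬ k.Prime) : 2 * k ∣ (k - 1).factorial := by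
  obtain ⟨a, b, hap, hb, hab, hb2⟩ :
      ∃ a b, a.Prime ∧ a * b = k ∧ a ≤ b ∧ 2 ≤ b := by
    refine ⟨k.minFac, k / k.minFac, Nat.minFac_prime (by omega), ?_, ?_, ?_⟩
    · exact Nat.mul_div_cancel' (Nat.minFac_dvd k)
    · refine Nat.minFac_le_of_dvd ?_ (Nat.div_dvd_of_dvd (Nat.minFac_dvd k))
      rcases Nat.lt_or_ge (k / k.minFac) 2 with h | h
      · exfalso
        have hd := Nat.mul_div_cancel' (Nat.minFac_dvd k)
        interval_cases h' : (k / k.minFac)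
        · omega
        · rw [mul_one] at hd; exact hp (hd ▸ Nat.minFac_prime (by omega))
      · exact h
    · rcases Nat.lt_or_ge (k / k.minFac) 2 with h | h
      · exfalso
        have hd := Nat.mul_div_cancel' (Nat.minFac_dvd k)
        interval_cases h' : (k / k.minFac)
        · omega
        · rw [mul_one] at hd; exact hp (hd ▸ Nat.minFac_prime (by omega))
      · exact h
  have ha2 : 2 ≤ a := hap.two_le
  rcases Nat.lt_or_ge 2 a with h3 | h2a
  · rcases Nat.lt_or_ge a b with hlt | hge
    · have h2b : 2 * b < k := by nlinarith
      have hsub : ({a, b, 2*b} : Finset ℕ) ⊆ Finset.Icc 1 (k - 1) := by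
        intro x hx
        simp only [Finset.mem_insert, Finset.mem_singleton] at hx
        rw [Finset.mem_Icc]
        rcases hx with rfl | rfl | rfl <;> omega
      have hd := prod_dvd_fact hsub
      rw [Finset.prod_insert (by simp; omega), Finset.prod_insert (by simp; omega),
        Finset.prod_singleton] at hd
      exact dvd_trans ⟨b, by rw [← hb]; ring⟩ hd
    · have heq : a = b := le_antisymm hab hge
      subst heq
      have h2a' : 2 * a < k := by nlinarith
      have hsub : ({a, 2*a} : Finset ℕ) ⊆ Finset.Icc 1 (k - 1) := by
        intro x hx
        simp only [Finset.mem_insert, Finset.mem_singleton] at hx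
        rw [Finset.mem_Icc]
        rcases hx with rfl | rfl <;> omega
      have hd := prod_dvd_fact hsub
      rw [Finset.prod_insert (by simp; omega), Finset.prod_singleton] at hd
      exact dvd_trans ⟨1, by rw [← hb]; ring⟩ hd
  · have ha2' : a = 2 := by omega
    subst ha2'
    rcases eq_or_ne b 4 with hb4 | hb4
    · subst hb4
      have : k = 8 := by omega
      subst this; decide
    · have h4 : 4 < k := by omega
      have hbk : b < k := by omega
      have hsub : ({4, b} : Finset ℕ) ⊆ Finset.Icc 1 (k - 1) := by
        intro x hx
        simp only [Finset.mem_insert, Finset.mem_singleton] at hx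
        rw [Finset.mem_Icc]
        rcases hx with rfl | rfl <;> omega
      have hd := prod_dvd_fact hsub
      rw [Finset.prod_insert (by simpa using hb4.symm), Finset.prod_singleton] at hd
      exact dvd_trans ⟨1, by omega⟩ hd

lemma comp_term {k : ℕ} (hk : 6 ≤ k) (hp : ¬ k.Prime) :
    Real.sin (Real.pi / 2 * (k - 1).factorial / k) = 0 := by
  obtain ⟨m, hm⟩ := comp_dvd hk hp
  have hk0 : (k : ℝ) ≠ 0 := Nat.cast_ne_zero.mpr (by omega)
  have harg : Real.pi / 2 * ((k - 1).factorial : ℝ) / k = m * Real.pi := by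
    have hc : (((k - 1).factorial : ℕ) : ℝ) = 2 * k * m := by exact_mod_cast congrArg Nat.cast hm
    rw [hc]; field_simp
  rw [harg, Real.sin_nat_mul_pi]

lemma wilson_odd {p : ℕ} (hp : p.Prime) : ∃ m, (p - 1).factorial + 1 = p * (2 * m + 1) := by
  haveI := Fact.mk hp
  have hdvd : p ∣ (p - 1).factorial + 1 := by
    have := ZMod.wilsons_lemma (p := p)
    have h0 : (((p - 1).factorial + 1 : ℕ) : ZMod p) = 0 := by push_cast [this]; ring
    exact (ZMod.natCast_eq_zero_iff _ _).mp h0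
  obtain ⟨a, ha⟩ := hdvd
  have haodd : a % 2 = 1 := by
    rcases eq_or_ne p 2 with rfl | hp2
    · simp [Nat.factorial] at ha; omega
    · have heven : 2 ∣ (p - 1).factorial :=
        Nat.dvd_factorial (by omega) (by have := hp.two_le; omega)
      rcases Nat.even_or_odd a with he | ho
      · exfalso
        obtain ⟨c, hc⟩ := he
        obtain ⟨d, hd⟩ := heven
        have : (p - 1).factorial + 1 = 2 * (p * c) := by rw [ha, hc]; ring
        omega
      · exact Nat.odd_iff.mp ho
  obtain ⟨m, hm⟩ : ∃ m, a = 2 * m + 1 := ⟨a / 2, by omega⟩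
  exact ⟨m, by rw [ha, hm]⟩

lemma prime_term {p : ℕ} (hp : p.Prime) :
    Real.sin (Real.pi / 2 * (p - 1).factorial / p) ^ 2
      = 1 - Real.sin (Real.pi / (2 * p)) ^ 2 := by
  obtain ⟨m, hm⟩ := wilson_odd hp
  have hp0 : (p : ℝ) ≠ 0 := Nat.cast_ne_zero.mpr hp.pos.ne'
  have hf : ((p - 1).factorial : ℝ) = p * (2 * m + 1) - 1 := by
    have : (((p - 1).factorial + 1 : ℕ) : ℝ) = ((p * (2 * m + 1) : ℕ) : ℝ) := by rw [hm]
    push_cast at this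
    linarith
  have harg : Real.pi / 2 * ((p - 1).factorial : ℝ) / p
      = (Real.pi / 2 - Real.pi / (2 * p)) + m * Real.pi := by
    rw [hf]; field_simp; ring
  rw [harg, Real.sin_add_nat_mul_pi, mul_pow, ← pow_mul, mul_comm m 2, pow_mul, neg_one_sq,
    one_pow, one_mul, Real.sin_pi_div_two_sub, Real.cos_sq']

lemma tele (n : ℕ) (hn : 4 ≤ n) :
    ∑ k ∈ Finset.Ioc 4 n, (1 / ((k : ℝ) - 1) - 1 / k) = 1 / 4 - 1 / n := by
  induction n, hn using Nat.le_induction with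
  | base => norm_num
  | succ n hn ih =>
      rw [Finset.sum_Ioc_succ_top (by omega), ih]
      have hn0 : (n : ℝ) ≠ 0 := Nat.cast_ne_zero.mpr (by omega)
      have hn1 : ((n : ℝ) + 1) ≠ 0 := by positivity
      push_cast
      rw [show (n : ℝ) + 1 - 1 = (n : ℝ) by ring]
      field_simp
      ring

theorem stmt_4 (n : ℕ) (hn : 1 < n) :
    ⌊∑ k ∈ Finset.Icc 1 n,
        Real.sin (Real.pi / 2 * (k - 1).factorial / k) ^ 2⌋
      = (Nat.primeCounting n : ℤ) := by
  have s1 : Real.sin (Real.pi / 2 * (((1:ℕ) - 1).factorial : ℝ) / ((1:ℕ) : ℝ)) ^ 2 = 1 := by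
    norm_num [Nat.factorial, Real.sin_pi_div_two]
  have s2 : Real.sin (Real.pi / 2 * (((2:ℕ) - 1).factorial : ℝ) / ((2:ℕ) : ℝ)) ^ 2 = 1/2 := by
    have harg : Real.pi / 2 * (((2:ℕ) - 1).factorial : ℝ) / ((2:ℕ) : ℝ) = Real.pi / 4 := by
      norm_num [Nat.factorial]; try ring
    rw [harg, Real.sin_pi_div_four, div_pow, Real.sq_sqrt (by norm_num)]
    norm_num
  have s3 : Real.sin (Real.pi / 2 * (((3:ℕ) - 1).factorial : ℝ) / ((3:ℕ) : ℝ)) ^ 2 = 3/4 := by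
    have harg : Real.pi / 2 * (((3:ℕ) - 1).factorial : ℝ) / ((3:ℕ) : ℝ) = Real.pi / 3 := by
      norm_num [Nat.factorial]; try ring
    rw [harg, Real.sin_pi_div_three, div_pow, Real.sq_sqrt (by norm_num)]
    norm_num
  have s4 : Real.sin (Real.pi / 2 * (((4:ℕ) - 1).factorial : ℝ) / ((4:ℕ) : ℝ)) ^ 2 = 1/2 := by
    have harg : Real.pi / 2 * (((4:ℕ) - 1).factorial : ℝ) / ((4:ℕ) : ℝ)
        = Real.pi - Real.pi / 4 := by
      norm_num [Nat.factorial]; try ring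
    rw [harg, Real.sin_pi_sub, Real.sin_pi_div_four, div_pow, Real.sq_sqrt (by norm_num)]
    norm_num
  rcases Nat.lt_or_ge n 4 with h4 | h4
  · interval_cases n
    · rw [show Finset.Icc 1 2 = {1, 2} from by decide, Finset.sum_insert (by decide),
        Finset.sum_singleton, s1, s2]
      rw [show (Nat.primeCounting 2 : ℤ) = 1 from by decide]
      rw [Int.floor_eq_iff] <;> norm_num
    · rw [show Finset.Icc 1 3 = {1, 2, 3} from by decide, Finset.sum_insert (by decide),
        Finset.sum_insert (by decide), Finset.sum_singleton, s1, s2, s3]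
      rw [show (Nat.primeCounting 3 : ℤ) = 2 from by decide]
      rw [Int.floor_eq_iff] <;> norm_num
  · -- main case n ≥ 4
    have hIcc : Finset.Icc 1 n = Finset.Ioc 0 n := by
      ext x; simp only [Finset.mem_Icc, Finset.mem_Ioc]; omega
    rw [hIcc, ← Finset.sum_Ioc_consecutive _ (Nat.zero_le 4) h4]
    have head : ∑ k ∈ Finset.Ioc (0:ℕ) 4,
        Real.sin (Real.pi / 2 * (k - 1).factorial / k) ^ 2 = 11/4 := by
      rw [show Finset.Ioc 0 4 = {1, 2, 3, 4} from by decide, Finset.sum_insert (by decide),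
        Finset.sum_insert (by decide), Finset.sum_insert (by decide), Finset.sum_singleton,
        s1, s2, s3, s4]
      norm_num
    have tail_eq : ∑ k ∈ Finset.Ioc 4 n,
        Real.sin (Real.pi / 2 * (k - 1).factorial / k) ^ 2
        = ∑ k ∈ Finset.Ioc 4 n,
          ((if k.Prime then (1:ℝ) else 0) - (if k.Prime then Real.sin (Real.pi / (2 * k)) ^ 2 else 0)) := by
      refine Finset.sum_congr rfl (fun k hk => ?_)
      simp only [Finset.mem_Ioc] at hk
      by_cases hkp : k.Prime
      · rw [prime_term hkp, if_pos hkp, if_pos hkp]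
      · have h6 : 6 ≤ k := by
          have h5 : k ≠ 5 := fun h => hkp (h ▸ (by norm_num))
          omega
        rw [comp_term h6 hkp, if_neg hkp, if_neg hkp]
        norm_num
    rw [head, tail_eq, Finset.sum_sub_distrib, Finset.sum_boole]
    set c := (Finset.filter Nat.Prime (Finset.Ioc 4 n)).card with hc
    set E := ∑ k ∈ Finset.Ioc 4 n, (if k.Prime then Real.sin (Real.pi / (2 * k)) ^ 2 else 0) with hE
    have hcount : Nat.primeCounting n = c + 2 := by
      rw [Nat.primeCounting, Nat.primeCounting', Nat.count_eq_card_filter_range]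
      have hfil : Finset.filter Nat.Prime (Finset.range (n+1))
          = insert 2 (insert 3 (Finset.filter Nat.Prime (Finset.Ioc 4 n))) := by
        ext x
        simp only [Finset.mem_filter, Finset.mem_range, Finset.mem_insert, Finset.mem_Ioc]
        constructor
        · rintro ⟨hx, hp⟩
          rcases Nat.lt_or_ge x 5 with h | h
          · interval_cases x <;> revert hp <;> norm_num
          · right; right; exact ⟨⟨by omega, by omega⟩, hp⟩
        · rintro (rfl | rfl | ⟨⟨h1, h2⟩, hp⟩)
          · exact ⟨by omega, by norm_num⟩
          · exact ⟨by omega, by norm_num⟩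
          · exact ⟨by omega, hp⟩
      rw [hfil, Finset.card_insert_of_notMem (by simp), Finset.card_insert_of_notMem (by simp)]
    have hE0 : 0 ≤ E := by
      refine Finset.sum_nonneg (fun k _ => ?_)
      split <;> positivity
    have hE1 : E ≤ 5/8 := by
      have hb : ∀ k ∈ Finset.Ioc 4 n,
          (if k.Prime then Real.sin (Real.pi / (2 * k)) ^ 2 else 0)
            ≤ 5/2 * (1 / ((k : ℝ) - 1) - 1 / k) := by
        intro k hk
        simp only [Finset.mem_Ioc] at hk
        have hk5 : (5:ℝ) ≤ (k : ℝ) := by exact_mod_cast hk.1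
        have h1 : (0:ℝ) < (k : ℝ) - 1 := by linarith
        have hk0 : (0:ℝ) < (k : ℝ) := by linarith
        have hsimp : 1 / ((k : ℝ) - 1) - 1 / k = 1 / (((k : ℝ) - 1) * k) := by
          field_simp
          ring
        rw [hsimp]
        have h10 : Real.pi ^ 2 ≤ 10 := by nlinarith [Real.pi_lt_d2, Real.pi_pos]
        split
        · have h2 := Real.sin_sq_le_sq (x := Real.pi / (2 * (k:ℝ)))
          have h3 : (Real.pi / (2 * (k:ℝ))) ^ 2 ≤ 5/2 * (1 / (((k : ℝ) - 1) * k)) := by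
            rw [div_pow, mul_one_div, div_le_div_iff₀ (by positivity) (by positivity)]
            nlinarith [Real.pi_pos]
          linarith
        · positivity
      calc E ≤ ∑ k ∈ Finset.Ioc 4 n, 5/2 * (1 / ((k : ℝ) - 1) - 1 / k) :=
            Finset.sum_le_sum hb
        _ = 5/2 * (1/4 - 1/(n:ℝ)) := by rw [← Finset.mul_sum, tele n h4]
        _ ≤ 5/8 := by
            have hn0 : (0:ℝ) < 1/(n:ℝ) := by positivity
            linarith
    have hπn : ((Nat.primeCounting n : ℤ) : ℝ) = (c : ℝ) + 2 := by
      rw [hcount]; push_cast; ring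
    rw [Int.floor_eq_iff]
    constructor
    · rw [hπn]; linarith
    · push_cast [hπn]; linarith
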